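/- Let (H, K, ◇) be a Takeuchi pair of bialgebras over a field k. Then the restriction of ◇ to P(H) ⊗ K descends through the quotient K → Q(K) = ker(ε_K)/ker(ε_K)² (precomposed with h ↦ h − ε(h)1 if needed), yielding a well-defined pairing ev : P(H) ⊗ Q(K) → k satisfying ev([a,b] ⊗ q) = Σ ev(a ⊗ q⁽¹⁾) ev(b ⊗ q⁽²⁾), where the cobracket on Q(K) is induced by Δ − τΔ. That is, (P(H), Q(K), ev) is a Michaelis pair. -/

import Mathlib

open TensorProduct Coalgebra

variable {k : Type*} [Field k]

/-- The cyclic permutation `ξ(x ⊗ y ⊗ z) = z ⊗ x ⊗ y` on `Q ⊗ (Q ⊗ Q)`. -/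
noncomputable def cyc {Q : Type*} [AddCommGroup Q] [Module k Q] :
    Q ⊗[k] (Q ⊗[k] Q) →ₗ[k] Q ⊗[k] (Q ⊗[k] Q) :=
  (TensorProduct.comm k (Q ⊗[k] Q) Q).toLinearMap ∘ₗ
    (TensorProduct.assoc k Q Q Q).symm.toLinearMap

/-- The submodule of primitive elements of a bialgebra. -/
noncomputable def primitives (k H : Type*) [Field k] [Ring H] [Bialgebra k H] :
    Submodule k H where
  carrier := {x : H | comul (R := k) x = x ⊗ₜ[k] (1 : H) + (1 : H) ⊗ₜ[k] x}
  add_mem' := by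
    intro a b ha hb
    simp only [Set.mem_setOf_eq] at *
    rw [map_add, ha, hb, add_tmul, tmul_add]
    abel
  zero_mem' := by simp
  smul_mem' := by
    intro c x hx
    simp only [Set.mem_setOf_eq] at *
    rw [map_smul, hx, smul_add, smul_tmul', tmul_smul, smul_tmul']


set_option synthInstance.maxHeartbeats 800000
set_option maxHeartbeats 8000000


section generic
variable {k : Type*} [Field k] {M N : Type*} [AddCommGroup M] [Module k M]
  [AddCommGroup N] [Module k N]

lemma cyc_tmul (a b c : M) :
    cyc (k := k) (a ⊗ₜ[k] (b ⊗ₜ[k] c)) = c ⊗ₜ[k] (a ⊗ₜ[k] b) := by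
  simp [cyc]

lemma comm_comm (z : M ⊗[k] N) :
    (TensorProduct.comm k N M) ((TensorProduct.comm k M N) z) = z := by
  induction z with
  | zero => simp
  | tmul a b => simp
  | add a b ha hb => simp [map_add, ha, hb]

/-- swap of the first two factors on `M ⊗ (M ⊗ M)`. -/
noncomputable def swM (k : Type*) [Field k] (M : Type*) [AddCommGroup M] [Module k M] :
    M ⊗[k] (M ⊗[k] M) →ₗ[k] M ⊗[k] (M ⊗[k] M) :=
  (TensorProduct.assoc k M M M).toLinearMap ∘ₗ
    ((TensorProduct.comm k M M).toLinearMap.rTensor M) ∘ₗ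
      (TensorProduct.assoc k M M M).symm.toLinearMap

lemma swM_tmul (a b c : M) :
    swM k M (a ⊗ₜ[k] (b ⊗ₜ[k] c)) = b ⊗ₜ[k] (a ⊗ₜ[k] c) := by
  simp [swM]

lemma cyc_natural (f : M →ₗ[k] N) (z : M ⊗[k] (M ⊗[k] M)) :
    cyc (k := k) (TensorProduct.map f (TensorProduct.map f f) z)
      = TensorProduct.map f (TensorProduct.map f f) (cyc (k := k) z) := by
  induction z with
  | zero => simp
  | tmul a y =>
      induction y with
      | zero => simp [tmul_zero]
      | tmul b c => simp [cyc_tmul]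
      | add u v hu hv => simp only [tmul_add, map_add, hu, hv]
  | add a b ha hb => simp [map_add, ha, hb]

lemma jac_zero (z : M ⊗[k] (M ⊗[k] M)) :
    ((LinearMap.id + cyc (k := k) (Q := M) + cyc ∘ₗ cyc :
        M ⊗[k] (M ⊗[k] M) →ₗ[k] M ⊗[k] (M ⊗[k] M)))
      (z - swM k M z - cyc (k := k) (cyc (k := k) z)
        + swM k M (cyc (k := k) (cyc (k := k) z))) = 0 := by
  induction z with
  | zero => simp
  | tmul a y =>
      induction y with
      | zero => simp [tmul_zero]
      | tmul b c =>
          simp only [LinearMap.add_apply, LinearMap.id_apply, LinearMap.comp_apply,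
            map_add, map_sub, cyc_tmul, swM_tmul]
          abel
      | add u v hu hv =>
          rw [tmul_add]
          rw [show ∀ (p q : M ⊗[k] (M ⊗[k] M)),
            (p + q) - swM k M (p + q) - cyc (k := k) (cyc (p + q))
              + swM k M (cyc (k := k) (cyc (p + q)))
            = (p - swM k M p - cyc (k := k) (cyc p) + swM k M (cyc (k := k) (cyc p)))
              + (q - swM k M q - cyc (k := k) (cyc q) + swM k M (cyc (k := k) (cyc q)))
            from fun p q => by simp only [map_add]; abel]
          rw [map_add, hu, hv, add_zero]
  | add a b ha hb =>
      rw [show ∀ (p q : M ⊗[k] (M ⊗[k] M)),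
        (p + q) - swM k M (p + q) - cyc (k := k) (cyc (p + q))
          + swM k M (cyc (k := k) (cyc (p + q)))
        = (p - swM k M p - cyc (k := k) (cyc p) + swM k M (cyc (k := k) (cyc p)))
          + (q - swM k M q - cyc (k := k) (cyc q) + swM k M (cyc (k := k) (cyc q)))
        from fun p q => by simp only [map_add]; abel]
      rw [map_add, ha, hb, add_zero]

end generic

section aux
variable {k : Type*} [Field k] {K : Type*} [Ring K] [Bialgebra k K]

noncomputable def jmK (k : Type*) [Field k] (K : Type*) [Ring K] [Bialgebra k K] : K →ₗ[k] K :=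
  LinearMap.id - (Algebra.linearMap k K) ∘ₗ counit

lemma jmK_apply (x : K) : jmK k K x = x - counit (R := k) x • 1 := by
  simp [jmK, Algebra.algebraMap_eq_smul_one]

lemma jmK_one : jmK k K 1 = 0 := by simp [jmK_apply]

lemma counit_jmK (x : K) : counit (R := k) (jmK k K x) = 0 := by
  simp [jmK_apply]

lemma mapjj_comul (x : K) :
    TensorProduct.map (jmK k K) (jmK k K) (comul x)
      = comul (R := k) x - x ⊗ₜ[k] (1 : K) - (1 : K) ⊗ₜ[k] x
        + counit (R := k) x • ((1:K) ⊗ₜ[k] (1:K)) := by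
  have hmap : TensorProduct.map (jmK k K) (jmK k K)
      = ((jmK k K).rTensor K) ∘ₗ ((jmK k K).lTensor K) := by
    rw [LinearMap.rTensor_comp_lTensor]
  have hl : (jmK k K).lTensor K (comul x) = comul (R := k) x - x ⊗ₜ[k] (1 : K) := by
    rw [jmK, LinearMap.lTensor_sub, LinearMap.sub_apply, LinearMap.lTensor_id,
      LinearMap.id_apply, LinearMap.lTensor_comp, LinearMap.comp_apply,
      lTensor_counit_comul]
    simp
  rw [hmap, LinearMap.comp_apply, hl, map_sub]
  have hr : (jmK k K).rTensor K (comul x) = comul (R := k) x - (1 : K) ⊗ₜ[k] x := by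
    rw [jmK, LinearMap.rTensor_sub, LinearMap.sub_apply, LinearMap.rTensor_id,
      LinearMap.id_apply, LinearMap.rTensor_comp, LinearMap.comp_apply,
      rTensor_counit_comul]
    simp
  rw [hr, LinearMap.rTensor_tmul, jmK_apply, sub_tmul, smul_tmul']
  abel

lemma comul_jmK (x : K) :
    TensorProduct.map (jmK k K) (jmK k K) (comul (R := k) (jmK k K x))
      = TensorProduct.map (jmK k K) (jmK k K) (comul (R := k) x) := by
  rw [jmK_apply, map_sub, map_smul, map_sub, map_smul, Bialgebra.comul_one]
  simp [Algebra.TensorProduct.one_def, jmK_one]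


/-- `ρ : K → I = ker ε`, `x ↦ x - ε(x)•1`. -/
noncomputable def rhoK (k : Type*) [Field k] (K : Type*) [Ring K] [Bialgebra k K] :
    K →ₗ[k] ↥(LinearMap.ker (counit (R := k) (A := K))) :=
  (jmK k K).codRestrict _ (fun x => by
    simp only [LinearMap.mem_ker]; exact counit_jmK x)

lemma rhoK_coe (x : K) : ((rhoK k K x : K)) = jmK k K x := rfl

lemma rhoK_of_mem {x : K} (hx : x ∈ LinearMap.ker (counit (R := k) (A := K))) :
    rhoK k K x = ⟨x, hx⟩ := by
  apply Subtype.ext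
  rw [rhoK_coe, jmK_apply, LinearMap.mem_ker.mp hx]
  simp

lemma rhoK_one : rhoK k K 1 = 0 := by
  apply Subtype.ext; rw [rhoK_coe, jmK_one]; rfl

/-- the reduced comultiplication `I → I ⊗ I`. -/
noncomputable def TK (k : Type*) [Field k] (K : Type*) [Ring K] [Bialgebra k K] :
    ↥(LinearMap.ker (counit (R := k) (A := K))) →ₗ[k]
      ↥(LinearMap.ker (counit (R := k) (A := K))) ⊗[k]
        ↥(LinearMap.ker (counit (R := k) (A := K))) :=
  TensorProduct.map (rhoK k K) (rhoK k K) ∘ₗ comul ∘ₗ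
    (LinearMap.ker (counit (R := k) (A := K))).subtype

section
variable (S : Submodule k K)

end

lemma mapSS_maprr (u : K ⊗[k] K) :
    TensorProduct.map (LinearMap.ker (counit (R := k) (A := K))).subtype
        (LinearMap.ker (counit (R := k) (A := K))).subtype
        (TensorProduct.map (rhoK k K) (rhoK k K) u)
      = TensorProduct.map (jmK k K) (jmK k K) u := by
  induction u with
  | zero => simp
  | tmul a b => simp [rhoK_coe]
  | add a b ha hb => simp [map_add, ha, hb]

lemma mapSS_TK (x : ↥(LinearMap.ker (counit (R := k) (A := K)))) :
    TensorProduct.map (LinearMap.ker (counit (R := k) (A := K))).subtype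
        (LinearMap.ker (counit (R := k) (A := K))).subtype (TK k K x)
      = comul (R := k) x.1 - x.1 ⊗ₜ[k] (1 : K) - (1 : K) ⊗ₜ[k] x.1 := by
  rw [TK]
  simp only [LinearMap.comp_apply, Submodule.subtype_apply]
  rw [mapSS_maprr, mapjj_comul, LinearMap.mem_ker.mp x.2]
  simp


lemma mapInj {M N M' N' : Type*} [AddCommGroup M] [Module k M] [AddCommGroup N] [Module k N]
    [AddCommGroup M'] [Module k M'] [AddCommGroup N'] [Module k N']
    (f : M →ₗ[k] M') (g : N →ₗ[k] N') (hf : Function.Injective f)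
    (hg : Function.Injective g) : Function.Injective (TensorProduct.map f g) := by
  rw [← LinearMap.rTensor_comp_lTensor]
  exact (Module.Flat.rTensor_preserves_injective_linearMap f hf).comp
    (Module.Flat.lTensor_preserves_injective_linearMap g hg)

lemma mapSS_TK' (x : ↥(LinearMap.ker (counit (R := k) (A := K)))) :
    TensorProduct.map (LinearMap.ker (counit (R := k) (A := K))).subtype
        (LinearMap.ker (counit (R := k) (A := K))).subtype (TK k K x)
      = TensorProduct.map (jmK k K) (jmK k K) (comul (R := k) x.1) := by
  rw [TK]
  simp only [LinearMap.comp_apply, Submodule.subtype_apply]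
  rw [mapSS_maprr]

lemma coassocTK (x : ↥(LinearMap.ker (counit (R := k) (A := K)))) :
    (TensorProduct.assoc k _ _ _) ((TK k K).rTensor _ (TK k K x))
      = (TK k K).lTensor _ (TK k K x) := by
  set S := (LinearMap.ker (counit (R := k) (A := K))).subtype with hS
  have hinj : Function.Injective (TensorProduct.map S (TensorProduct.map S S)) :=
    mapInj _ _ (Submodule.injective_subtype _)
      (mapInj _ _ (Submodule.injective_subtype _) (Submodule.injective_subtype _))
  apply hinj
  have LA : ∀ u : K ⊗[k] K,
      TensorProduct.map S (TensorProduct.map S S)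
        ((TensorProduct.assoc k _ _ _)
          ((TK k K).rTensor _ (TensorProduct.map (rhoK k K) (rhoK k K) u)))
      = TensorProduct.map (jmK k K) (TensorProduct.map (jmK k K) (jmK k K))
          ((TensorProduct.assoc k K K K) ((comul (R := k)).rTensor K u)) := by
    intro u
    induction u with
    | zero => simp
    | tmul a b =>
        rw [TensorProduct.map_tmul, LinearMap.rTensor_tmul, LinearMap.rTensor_tmul,
          TensorProduct.map_map_assoc, TensorProduct.map_map_assoc]
        rw [TensorProduct.map_tmul, TensorProduct.map_tmul, mapSS_TK', rhoK_coe, comul_jmK]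
        rfl
    | add a b ha hb => simp only [map_add, ha, hb]
  have LB : ∀ u : K ⊗[k] K,
      TensorProduct.map S (TensorProduct.map S S)
        ((TK k K).lTensor _ (TensorProduct.map (rhoK k K) (rhoK k K) u))
      = TensorProduct.map (jmK k K) (TensorProduct.map (jmK k K) (jmK k K))
          ((comul (R := k)).lTensor K u) := by
    intro u
    induction u with
    | zero => simp
    | tmul a b =>
        rw [TensorProduct.map_tmul, LinearMap.lTensor_tmul, LinearMap.lTensor_tmul,
          TensorProduct.map_tmul, mapSS_TK', rhoK_coe, comul_jmK]
        rfl
    | add a b ha hb => simp only [map_add, ha, hb]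
  have h1 : TK k K x = TensorProduct.map (rhoK k K) (rhoK k K) (comul (R := k) x.1) := rfl
  rw [h1, LA, LB, coassoc_apply]


lemma mapcomp2 {A B C : Type*} [AddCommGroup A] [Module k A] [AddCommGroup B] [Module k B]
    [AddCommGroup C] [Module k C] (f : B →ₗ[k] C) (g : A →ₗ[k] B) (u : A ⊗[k] A) :
    TensorProduct.map f f (TensorProduct.map g g u)
      = TensorProduct.map (f ∘ₗ g) (f ∘ₗ g) u := by
  induction u with
  | zero => simp
  | tmul a b => simp
  | add a b ha hb => simp [map_add, ha, hb]

section pairing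
variable {Q : Type*} [AddCommGroup Q] [Module k Q]
  (p2 : K →ₗ[k] Q)
  (hkill : ∀ a b : K, a ∈ LinearMap.ker (counit (R := k) (A := K)) →
    b ∈ LinearMap.ker (counit (R := k) (A := K)) → p2 (a * b) = 0)

include hkill

lemma zmulL (c d : K) (hc : c ∈ LinearMap.ker (counit (R := k) (A := K)))
    (y : ↥(LinearMap.ker (counit (R := k) (A := K))) ⊗[k]
      ↥(LinearMap.ker (counit (R := k) (A := K)))) :
    TensorProduct.map p2 p2
      ((TensorProduct.map (Submodule.subtype _) (Submodule.subtype _) y) * (c ⊗ₜ[k] d)) = 0 := by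
  induction y with
  | zero => simp
  | tmul u v =>
      rw [TensorProduct.map_tmul, Submodule.subtype_apply, Submodule.subtype_apply,
        Algebra.TensorProduct.tmul_mul_tmul, TensorProduct.map_tmul,
        hkill u.1 c u.2 hc, zero_tmul]
  | add a b ha hb => rw [map_add, add_mul, map_add, ha, hb, add_zero]

lemma zmulR (c d : K) (hd : d ∈ LinearMap.ker (counit (R := k) (A := K)))
    (y : ↥(LinearMap.ker (counit (R := k) (A := K))) ⊗[k]
      ↥(LinearMap.ker (counit (R := k) (A := K)))) :
    TensorProduct.map p2 p2
      ((TensorProduct.map (Submodule.subtype _) (Submodule.subtype _) y) * (c ⊗ₜ[k] d)) = 0 := by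
  induction y with
  | zero => simp
  | tmul u v =>
      rw [TensorProduct.map_tmul, Submodule.subtype_apply, Submodule.subtype_apply,
        Algebra.TensorProduct.tmul_mul_tmul, TensorProduct.map_tmul,
        hkill v.1 d v.2 hd, tmul_zero]
  | add a b ha hb => rw [map_add, add_mul, map_add, ha, hb, add_zero]

lemma zmulL' (c d : K) (hc : c ∈ LinearMap.ker (counit (R := k) (A := K)))
    (y : ↥(LinearMap.ker (counit (R := k) (A := K))) ⊗[k]
      ↥(LinearMap.ker (counit (R := k) (A := K)))) :
    TensorProduct.map p2 p2
      ((c ⊗ₜ[k] d) * (TensorProduct.map (Submodule.subtype _) (Submodule.subtype _) y)) = 0 := by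
  induction y with
  | zero => simp
  | tmul u v =>
      rw [TensorProduct.map_tmul, Submodule.subtype_apply, Submodule.subtype_apply,
        Algebra.TensorProduct.tmul_mul_tmul, TensorProduct.map_tmul,
        hkill c u.1 hc u.2, zero_tmul]
  | add a b ha hb => rw [map_add, mul_add, map_add, ha, hb, add_zero]

lemma zmulR' (c d : K) (hd : d ∈ LinearMap.ker (counit (R := k) (A := K)))
    (y : ↥(LinearMap.ker (counit (R := k) (A := K))) ⊗[k]
      ↥(LinearMap.ker (counit (R := k) (A := K)))) :
    TensorProduct.map p2 p2
      ((c ⊗ₜ[k] d) * (TensorProduct.map (Submodule.subtype _) (Submodule.subtype _) y)) = 0 := by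
  induction y with
  | zero => simp
  | tmul u v =>
      rw [TensorProduct.map_tmul, Submodule.subtype_apply, Submodule.subtype_apply,
        Algebra.TensorProduct.tmul_mul_tmul, TensorProduct.map_tmul,
        hkill d v.1 hd v.2, tmul_zero]
  | add a b ha hb => rw [map_add, mul_add, map_add, ha, hb, add_zero]

lemma zmulSS (ya yb : ↥(LinearMap.ker (counit (R := k) (A := K))) ⊗[k]
      ↥(LinearMap.ker (counit (R := k) (A := K)))) :
    TensorProduct.map p2 p2
      ((TensorProduct.map (Submodule.subtype _) (Submodule.subtype _) ya) *
        (TensorProduct.map (Submodule.subtype _) (Submodule.subtype _) yb)) = 0 := by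
  induction yb with
  | zero => simp
  | tmul u v =>
      rw [TensorProduct.map_tmul, Submodule.subtype_apply, Submodule.subtype_apply]
      exact zmulL p2 hkill u.1 v.1 u.2 ya
  | add a b ha hb => rw [map_add, mul_add, map_add, ha, hb, add_zero]

lemma hexp (h0 : p2 1 = 0) (a b : K)
    (ha : a ∈ LinearMap.ker (counit (R := k) (A := K)))
    (hb : b ∈ LinearMap.ker (counit (R := k) (A := K))) :
    TensorProduct.map p2 p2 (comul (R := k) a * comul (R := k) b)
      = p2 a ⊗ₜ[k] p2 b + p2 b ⊗ₜ[k] p2 a := by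
  have hca : comul (R := k) a = a ⊗ₜ[k] (1:K) + (1:K) ⊗ₜ[k] a
      + TensorProduct.map (Submodule.subtype _) (Submodule.subtype _) (TK k K ⟨a, ha⟩) := by
    rw [mapSS_TK]; abel
  have hcb : comul (R := k) b = b ⊗ₜ[k] (1:K) + (1:K) ⊗ₜ[k] b
      + TensorProduct.map (Submodule.subtype _) (Submodule.subtype _) (TK k K ⟨b, hb⟩) := by
    rw [mapSS_TK]; abel
  rw [hca, hcb]
  rw [add_mul, add_mul, mul_add, mul_add, mul_add, mul_add, mul_add, mul_add]
  simp only [map_add]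
  rw [Algebra.TensorProduct.tmul_mul_tmul, Algebra.TensorProduct.tmul_mul_tmul,
    Algebra.TensorProduct.tmul_mul_tmul, Algebra.TensorProduct.tmul_mul_tmul]
  rw [zmulL' p2 hkill a 1 ha, zmulR' p2 hkill 1 a ha,
    zmulL p2 hkill b 1 hb, zmulR p2 hkill 1 b hb, zmulSS p2 hkill]
  simp only [one_mul, mul_one, TensorProduct.map_tmul, h0, tmul_zero, zero_tmul]
  abel

end pairing

abbrev kerACG : AddCommGroup ↥(LinearMap.ker (counit (R := k) (A := K))) :=
  Submodule.addCommGroup _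

attribute [local instance] kerACG

/-- the cobracket lift `w = (1 - τ) ∘ T` on `I`. -/
noncomputable def wwK (k : Type*) [Field k] (K : Type*) [Ring K] [Bialgebra k K] :
    ↥(LinearMap.ker (counit (R := k) (A := K))) →ₗ[k]
      ↥(LinearMap.ker (counit (R := k) (A := K))) ⊗[k]
        ↥(LinearMap.ker (counit (R := k) (A := K))) :=
  TK k K - (TensorProduct.comm k _ _).toLinearMap ∘ₗ TK k K


lemma wwK_apply (x : ↥(LinearMap.ker (counit (R := k) (A := K)))) :
    wwK k K x = TK k K x - (TensorProduct.comm k _ _) (TK k K x) := rfl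

lemma mapSS_wwK (x : ↥(LinearMap.ker (counit (R := k) (A := K)))) :
    TensorProduct.map (Submodule.subtype _) (Submodule.subtype _) (wwK k K x)
      = comul (R := k) x.1 - (TensorProduct.comm k K K) (comul (R := k) x.1) := by
  rw [wwK_apply, map_sub, mapSS_TK, TensorProduct.map_comm, mapSS_TK]
  rw [map_sub, map_sub, TensorProduct.comm_tmul, TensorProduct.comm_tmul]
  abel

lemma wwK_comm (x : ↥(LinearMap.ker (counit (R := k) (A := K)))) :
    (TensorProduct.comm k _ _) (wwK k K x) = - wwK k K x := by
  rw [wwK_apply, map_sub, comm_comm]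
  abel

lemma assoc_rTensor_comm (z : (↥(LinearMap.ker (counit (R := k) (A := K))) ⊗[k]
      ↥(LinearMap.ker (counit (R := k) (A := K)))) ⊗[k]
      ↥(LinearMap.ker (counit (R := k) (A := K)))) :
    (TensorProduct.assoc k _ _ _)
        (((TensorProduct.comm k _ _).toLinearMap.rTensor _) z)
      = swM k _ ((TensorProduct.assoc k _ _ _) z) := by
  induction z with
  | zero => simp
  | tmul y c =>
      induction y with
      | zero => simp [zero_tmul]
      | tmul a b => simp [swM_tmul]
      | add u v hu hv => rw [add_tmul, map_add, map_add, map_add, map_add, hu, hv]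
  | add a b ha hb => simp only [map_add, ha, hb]

lemma assoc_flip_cyc (c : ↥(LinearMap.ker (counit (R := k) (A := K))) ⊗[k]
      ↥(LinearMap.ker (counit (R := k) (A := K))))
    (a : ↥(LinearMap.ker (counit (R := k) (A := K)))) :
    (TensorProduct.assoc k _ _ _) (c ⊗ₜ[k] a) = cyc (k := k) (cyc (k := k) (a ⊗ₜ[k] c)) := by
  induction c with
  | zero => simp [tmul_zero]
  | tmul u v => simp [cyc_tmul]
  | add u v hu hv => rw [add_tmul, map_add, tmul_add, map_add, map_add, hu, hv]

lemma assoc_rTensorT_comm (y : ↥(LinearMap.ker (counit (R := k) (A := K))) ⊗[k]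
      ↥(LinearMap.ker (counit (R := k) (A := K)))) :
    (TensorProduct.assoc k _ _ _)
        ((TK k K).rTensor _ ((TensorProduct.comm k _ _) y))
      = cyc (k := k) (cyc (k := k) ((TK k K).lTensor _ y)) := by
  induction y with
  | zero => simp
  | tmul a b =>
      rw [TensorProduct.comm_tmul, LinearMap.rTensor_tmul, LinearMap.lTensor_tmul]
      exact assoc_flip_cyc (TK k K b) a
  | add u v hu hv => simp only [map_add, hu, hv]

lemma jacI (x : ↥(LinearMap.ker (counit (R := k) (A := K)))) :
    ((LinearMap.id + cyc (k := k) + cyc ∘ₗ cyc :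
        ↥(LinearMap.ker (counit (R := k) (A := K))) ⊗[k]
          (↥(LinearMap.ker (counit (R := k) (A := K))) ⊗[k]
            ↥(LinearMap.ker (counit (R := k) (A := K)))) →ₗ[k] _))
      ((TensorProduct.assoc k _ _ _) ((wwK k K).rTensor _ (wwK k K x))) = 0 := by
  set T := TK k K
  set Θ := T.lTensor _ (T x) with hΘ
  have key : (TensorProduct.assoc k _ _ _) ((wwK k K).rTensor _ (wwK k K x))
      = Θ - swM k _ Θ - cyc (k := k) (cyc (k := k) Θ)
        + swM k _ (cyc (k := k) (cyc (k := k) Θ)) := by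
    have hw : (wwK k K).rTensor _ (wwK k K x)
        = T.rTensor _ (wwK k K x)
          - ((TensorProduct.comm k _ _).toLinearMap.rTensor _) (T.rTensor _ (wwK k K x)) := by
      rw [wwK, LinearMap.rTensor_sub, LinearMap.sub_apply, LinearMap.rTensor_comp]
      rfl
    rw [hw, map_sub, assoc_rTensor_comm]
    have h2 : (TensorProduct.assoc k _ _ _) (T.rTensor _ (wwK k K x))
        = Θ - cyc (k := k) (cyc (k := k) Θ) := by
      rw [wwK_apply, map_sub, map_sub, coassocTK, assoc_rTensorT_comm, hΘ]
    rw [h2, map_sub]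
    abel
  rw [key]
  exact jac_zero (k := k) Θ

end aux


/-- Let `(H, K, ◇)` be a Takeuchi pair of bialgebras over a field `k`.  Then the
restriction of `◇` to `P(H) ⊗ K` descends through the quotient
`K → Q(K) = ker ε / (ker ε)²`, yielding a well-defined pairing
`ev : P(H) ⊗ Q(K) → k` satisfying `ev([a,b] ⊗ q) = Σ ev(a ⊗ q⁽¹⁾) ev(b ⊗ q⁽²⁾)`,
where the cobracket on `Q(K)` is induced by `Δ − τΔ`.  That is,
`(P(H), Q(K), ev)` is a Michaelis pair. -/
theorem stmt18 {H K : Type*} [Ring H] [Bialgebra k H] [Ring K] [Bialgebra k K]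
    (D : H →ₗ[k] K →ₗ[k] k)
    (h1 : ∀ h : H, D h 1 = counit (R := k) h)
    (h2 : ∀ c : K, D 1 c = counit (R := k) c)
    (h3 : ∀ (h h' : H) (c : K), D (h * h') c
      = (TensorProduct.lid k k) (TensorProduct.map (D h) (D h') (comul (R := k) c)))
    (h4 : ∀ (h : H) (c c' : K), D h (c * c')
      = (TensorProduct.lid k k)
          (TensorProduct.map (D.flip c) (D.flip c') (comul (R := k) h))) :
    letI P : Submodule k H := primitives k H
    letI I : Submodule k K := LinearMap.ker (counit (R := k) (A := K))
    letI I2 : Submodule k K := I * I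
    letI DK : K →ₗ[k] K ⊗[k] K :=
      comul - (TensorProduct.comm k K K).toLinearMap ∘ₗ comul
    letI QK := ↥I ⧸ Submodule.comap I.subtype I2
    letI π : ↥I →ₗ[k] QK := (Submodule.comap I.subtype I2).mkQ
    -- `P(H)` is closed under the commutator bracket (a Lie algebra):
    (∀ a b : ↥P, a.1 * b.1 - b.1 * a.1 ∈ P) ∧
    ∃ (Υ : QK →ₗ[k] QK ⊗[k] QK) (ev : ↥P →ₗ[k] QK →ₗ[k] k),
      -- `Υ` is the cobracket induced on `Q(K)` by `Δ − τΔ`: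
      (∀ (x : ↥I) (y : ↥I ⊗[k] ↥I),
        TensorProduct.map I.subtype I.subtype y = DK x.1 →
          Υ (π x) = TensorProduct.map π π y) ∧
      -- `(Q(K), Υ)` is a Lie coalgebra:
      ((TensorProduct.comm k QK QK).toLinearMap ∘ₗ Υ = -Υ) ∧
      ((LinearMap.id + cyc (k := k) + cyc ∘ₗ cyc) ∘ₗ
        (TensorProduct.assoc k QK QK QK).toLinearMap ∘ₗ
          TensorProduct.map Υ LinearMap.id ∘ₗ Υ = 0) ∧
      -- `ev` is the pairing induced by `◇` (in particular `◇` descends):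
      (∀ (p : ↥P) (c : ↥I), ev p (π c) = D p.1 c.1) ∧
      -- the Michaelis pair compatibility:
      (∀ (a b : ↥P) (hab : a.1 * b.1 - b.1 * a.1 ∈ P) (q : QK),
        ev ⟨a.1 * b.1 - b.1 * a.1, hab⟩ q
          = (TensorProduct.lid k k) (TensorProduct.map (ev a) (ev b) (Υ q))) := by
  refine ⟨?_, ?_⟩
  · -- primitives closed under commutator
    intro a b
    have ha : comul (R := k) (a : H) = (a : H) ⊗ₜ[k] 1 + 1 ⊗ₜ[k] (a : H) := a.2
    have hb : comul (R := k) (b : H) = (b : H) ⊗ₜ[k] 1 + 1 ⊗ₜ[k] (b : H) := b.2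
    show comul (R := k) ((a : H) * b - (b : H) * a)
        = ((a : H) * b - (b : H) * a) ⊗ₜ[k] 1 + 1 ⊗ₜ[k] ((a : H) * b - (b : H) * a)
    rw [map_sub, Bialgebra.comul_mul, Bialgebra.comul_mul, ha, hb]
    simp only [add_mul, mul_add, Algebra.TensorProduct.tmul_mul_tmul, one_mul, mul_one]
    rw [sub_tmul, tmul_sub]
    abel
  · -- the Michaelis pair
    have hII : (LinearMap.ker (counit (R := k) (A := K)) *
          LinearMap.ker (counit (R := k) (A := K)) : Submodule k K)
        ≤ LinearMap.ker (counit (R := k) (A := K)) := by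
      rw [Submodule.mul_le]
      intro m hm n hn
      rw [LinearMap.mem_ker] at hm hn ⊢
      rw [Bialgebra.counit_mul, hm, zero_mul]
    set N : Submodule k ↥(LinearMap.ker (counit (R := k) (A := K))) :=
      Submodule.comap (Submodule.subtype (LinearMap.ker (counit (R := k) (A := K))))
        (LinearMap.ker (counit (R := k) (A := K)) * LinearMap.ker (counit (R := k) (A := K)))
      with hN
    -- facts about `P2 = π ∘ ρ`
    have hmemN : ∀ (x : ↥(LinearMap.ker (counit (R := k) (A := K)))),
        x ∈ N ↔ (x : K) ∈ (LinearMap.ker (counit (R := k) (A := K)) *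
          LinearMap.ker (counit (R := k) (A := K)) : Submodule k K) := by
      intro x
      rw [hN, Submodule.mem_comap, Submodule.subtype_apply]
    have hP2zero : ∀ z : K, z ∈ (LinearMap.ker (counit (R := k) (A := K)) *
          LinearMap.ker (counit (R := k) (A := K)) : Submodule k K) →
        N.mkQ (rhoK k K z) = 0 := by
      intro z hz
      rw [rhoK_of_mem (hII hz), Submodule.mkQ_apply, Submodule.Quotient.mk_eq_zero]
      rw [hmemN]
      exact hz
    have hkill : ∀ a b : K, a ∈ LinearMap.ker (counit (R := k) (A := K)) →
        b ∈ LinearMap.ker (counit (R := k) (A := K)) →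
        (N.mkQ ∘ₗ rhoK k K) (a * b) = 0 := by
      intro a b ha hb
      rw [LinearMap.comp_apply]
      exact hP2zero _ (Submodule.mul_mem_mul ha hb)
    have hP2one : (N.mkQ ∘ₗ rhoK k K) (1 : K) = 0 := by
      rw [LinearMap.comp_apply, rhoK_one, map_zero]
    -- `Δ - τΔ` kills `N`
    have hwkill : ∀ x, x ∈ N →
        TensorProduct.map N.mkQ N.mkQ (wwK k K x) = 0 := by
      have main : ∀ z (hz : z ∈ (LinearMap.ker (counit (R := k) (A := K)) *
            LinearMap.ker (counit (R := k) (A := K)) : Submodule k K)),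
          TensorProduct.map N.mkQ N.mkQ (wwK k K ⟨z, hII hz⟩) = 0 := by
        intro z hz
        induction hz using Submodule.mul_induction_on' with
        | mem_mul_mem a ha b hb =>
            have hT : TensorProduct.map N.mkQ N.mkQ
                (TK k K ⟨a * b, hII (Submodule.mul_mem_mul ha hb)⟩)
                = (N.mkQ ∘ₗ rhoK k K) a ⊗ₜ[k] (N.mkQ ∘ₗ rhoK k K) b
                  + (N.mkQ ∘ₗ rhoK k K) b ⊗ₜ[k] (N.mkQ ∘ₗ rhoK k K) a := by
              have hTd : TK k K ⟨a * b, hII (Submodule.mul_mem_mul ha hb)⟩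
                  = TensorProduct.map (rhoK k K) (rhoK k K) (comul (R := k) (a * b)) := rfl
              rw [hTd, mapcomp2, Bialgebra.comul_mul]
              exact hexp (N.mkQ ∘ₗ rhoK k K) hkill hP2one a b ha hb
            rw [wwK_apply, map_sub, TensorProduct.map_comm, hT, map_add,
              TensorProduct.comm_tmul, TensorProduct.comm_tmul]
            abel
        | add x hx y hy ihx ihy =>
            have hsplit : (⟨x + y, hII (add_mem hx hy)⟩ :
                ↥(LinearMap.ker (counit (R := k) (A := K))))
                = ⟨x, hII hx⟩ + ⟨y, hII hy⟩ := rfl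
            rw [hsplit, map_add, map_add, ihx, ihy, add_zero]
      intro x hx
      have hx' : (x : K) ∈ (LinearMap.ker (counit (R := k) (A := K)) *
          LinearMap.ker (counit (R := k) (A := K)) : Submodule k K) := (hmemN x).mp hx
      have hxeq : x = ⟨(x : K), hII hx'⟩ := Subtype.ext rfl
      rw [hxeq]
      exact main _ hx'
    -- D kills I² in the second argument for primitive first argument
    have hDkill : ∀ p : ↥(primitives k H), ∀ z ∈ (LinearMap.ker (counit (R := k) (A := K)) *
        LinearMap.ker (counit (R := k) (A := K)) : Submodule k K), D (p : H) z = 0 := by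
      intro p z hz
      have hp : comul (R := k) (p : H) = (p : H) ⊗ₜ[k] 1 + 1 ⊗ₜ[k] (p : H) := p.2
      refine Submodule.mul_induction_on hz ?_ ?_
      · intro m hm n hn
        rw [LinearMap.mem_ker] at hm hn
        rw [h4, hp, map_add, TensorProduct.map_tmul, TensorProduct.map_tmul, map_add,
          lid_tmul, lid_tmul]
        simp only [LinearMap.flip_apply]
        rw [h2 n, h2 m, hm, hn]
        simp
      · intro u v hu hv
        rw [map_add, hu, hv, add_zero]
    -- the cobracket and the pairing
    have hker : N ≤ LinearMap.ker (TensorProduct.map N.mkQ N.mkQ ∘ₗ wwK k K) :=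
      fun x hx => LinearMap.mem_ker.mpr (by
        rw [LinearMap.comp_apply]; exact hwkill x hx)
    have hker2 : ∀ p : ↥(primitives k H), N ≤ LinearMap.ker
        ((D (p : H)) ∘ₗ Submodule.subtype (LinearMap.ker (counit (R := k) (A := K)))) :=
      fun p x hx => LinearMap.mem_ker.mpr (by
        rw [LinearMap.comp_apply, Submodule.subtype_apply]
        exact hDkill p x.1 ((hmemN x).mp hx))
    have hUp : ∀ x', Submodule.liftQ N (TensorProduct.map N.mkQ N.mkQ ∘ₗ wwK k K) hker
        (N.mkQ x') = TensorProduct.map N.mkQ N.mkQ (wwK k K x') := fun x' => by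
      rw [Submodule.mkQ_apply, Submodule.liftQ_apply, LinearMap.comp_apply]
    have hev : ∀ (p : ↥(primitives k H)) (c : ↥(LinearMap.ker (counit (R := k) (A := K)))),
        Submodule.liftQ N ((D (p : H)) ∘ₗ Submodule.subtype _) (hker2 p) (N.mkQ c)
          = D (p : H) (c : K) := fun p c => by
      rw [Submodule.mkQ_apply, Submodule.liftQ_apply, LinearMap.comp_apply,
        Submodule.subtype_apply]
    refine ⟨Submodule.liftQ N (TensorProduct.map N.mkQ N.mkQ ∘ₗ wwK k K) hker,
      { toFun := fun p => Submodule.liftQ N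
          ((D (p : H)) ∘ₗ Submodule.subtype (LinearMap.ker (counit (R := k) (A := K))))
          (hker2 p)
        map_add' := by
          intro p p'
          apply LinearMap.ext
          intro q
          obtain ⟨x, rfl⟩ := N.mkQ_surjective q
          rw [Submodule.mkQ_apply, LinearMap.add_apply, Submodule.liftQ_apply,
            Submodule.liftQ_apply, Submodule.liftQ_apply]
          simp [map_add]
        map_smul' := by
          intro s p
          apply LinearMap.ext
          intro q
          obtain ⟨x, rfl⟩ := N.mkQ_surjective q
          rw [Submodule.mkQ_apply, RingHom.id_apply, LinearMap.smul_apply,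
            Submodule.liftQ_apply, Submodule.liftQ_apply]
          simp }, ?_, ?_, ?_, ?_, ?_⟩
    · -- defining property of Υ
      intro x y hy
      have hinj : Function.Injective (TensorProduct.map
          (Submodule.subtype (LinearMap.ker (counit (R := k) (A := K))))
          (Submodule.subtype (LinearMap.ker (counit (R := k) (A := K))))) :=
        mapInj _ _ (Submodule.injective_subtype _) (Submodule.injective_subtype _)
      have hyw : y = wwK k K x := by
        apply hinj
        rw [hy, mapSS_wwK]
        rfl
      rw [hyw, hUp]
    · -- antisymmetry
      apply LinearMap.ext
      intro q
      obtain ⟨x, rfl⟩ := N.mkQ_surjective q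
      rw [LinearMap.comp_apply, LinearMap.neg_apply, hUp, LinearEquiv.coe_coe,
        ← TensorProduct.map_comm, wwK_comm]
      letI := kerACG (k := k) (K := K)
      exact map_neg (TensorProduct.map N.mkQ N.mkQ) _
    · -- co-Jacobi
      apply LinearMap.ext
      intro q
      obtain ⟨x, rfl⟩ := N.mkQ_surjective q
      simp only [LinearMap.comp_apply, LinearMap.zero_apply, LinearEquiv.coe_coe]
      rw [hUp]
      have e2 : ∀ z, TensorProduct.map
          (Submodule.liftQ N (TensorProduct.map N.mkQ N.mkQ ∘ₗ wwK k K) hker)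
          LinearMap.id (TensorProduct.map N.mkQ N.mkQ z)
          = TensorProduct.map (TensorProduct.map N.mkQ N.mkQ) N.mkQ
              ((wwK k K).rTensor _ z) := by
        intro z
        induction z with
        | zero => simp
        | tmul u v =>
            simp only [TensorProduct.map_tmul, LinearMap.rTensor_tmul,
              LinearMap.id_apply, hUp]
        | add u v hu hv => simp only [map_add, hu, hv]
      rw [e2, (TensorProduct.map_map_assoc N.mkQ N.mkQ N.mkQ _).symm]
      simp only [LinearMap.add_apply, LinearMap.id_apply, LinearMap.comp_apply]
      rw [cyc_natural, cyc_natural, ← map_add, ← map_add]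
      have hj := jacI (k := k) (K := K) x
      simp only [LinearMap.add_apply, LinearMap.id_apply, LinearMap.comp_apply] at hj
      rw [hj, map_zero]
    · -- value of ev
      intro p c
      exact hev p c
    · -- Michaelis compatibility
      intro a b hab q
      obtain ⟨c, rfl⟩ := N.mkQ_surjective q
      simp only [LinearMap.coe_mk, AddHom.coe_mk]
      refine (hev ⟨_, hab⟩ c).trans ?_
      rw [hUp]
      have e5 : ∀ z, TensorProduct.map
          (Submodule.liftQ N ((D (a : H)) ∘ₗ Submodule.subtype _) (hker2 a))
          (Submodule.liftQ N ((D (b : H)) ∘ₗ Submodule.subtype _) (hker2 b))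
          (TensorProduct.map N.mkQ N.mkQ z)
          = TensorProduct.map (D (a : H)) (D (b : H))
              (TensorProduct.map (Submodule.subtype _) (Submodule.subtype _) z) := by
        intro z
        induction z with
        | zero => simp
        | tmul u v =>
            simp only [TensorProduct.map_tmul, hev a, hev b, Submodule.subtype_apply]
        | add u v hu hv => simp only [map_add, hu, hv]
      rw [e5, mapSS_wwK, map_sub, map_sub, map_sub]
      have e6 : ∀ u : K ⊗[k] K, (TensorProduct.lid k k)
          (TensorProduct.map (D (a : H)) (D (b : H)) ((TensorProduct.comm k K K) u))
          = (TensorProduct.lid k k) (TensorProduct.map (D (b : H)) (D (a : H)) u) := by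
        intro u
        induction u with
        | zero => simp
        | tmul x' y' =>
            rw [TensorProduct.comm_tmul, TensorProduct.map_tmul, TensorProduct.map_tmul,
              lid_tmul, lid_tmul]
            rw [smul_eq_mul, smul_eq_mul, mul_comm]
        | add u v hu hv => simp only [map_add, hu, hv]
      rw [e6, ← h3, ← h3, LinearMap.sub_apply]
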